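/- Let λ > 0 and δ ∈ (−1/2, 0) ∪ (0, 1/2], and let g(x) = x^δ e^(−λx) for x > 0 be the Gamma kernel, with derivative g′(x) = (δ x^(δ−1) − λ x^δ) e^(−λx). Then g′ is not square-integrable near zero: ∫₀^1 (g′(x))² dx = +∞. In particular g′ ∉ L²((0,∞)). -/

import Mathlib

open MeasureTheory Set

/-- For the Gamma kernel `g x = x ^ δ * exp (-l x)` with `l > 0` and
`δ ∈ (-1/2, 0) ∪ (0, 1/2]`, the derivative
`g' x = (δ x ^ (δ-1) - l x ^ δ) * exp (-l x)` is not square-integrable near zero: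
`∫₀¹ (g' x)² dx = ∞`, and in particular `g' ∉ L²((0,∞))`. -/
theorem gamma_kernel_derivative_not_square_integrable
    (l δ : ℝ) (hl : 0 < l) (hδ1 : -(1/2) < δ) (hδ2 : δ ≤ 1/2) (hδ0 : δ ≠ 0) :
    (∫⁻ x in Set.Ioc (0:ℝ) 1,
        ENNReal.ofReal (((δ * x ^ (δ - 1) - l * x ^ δ) * Real.exp (-(l * x))) ^ 2)) = ⊤ ∧
    ¬ MemLp (fun x : ℝ => (δ * x ^ (δ - 1) - l * x ^ δ) * Real.exp (-(l * x))) 2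
        (volume.restrict (Set.Ioi 0)) := by
  set f : ℝ → ℝ := fun x => (δ * x ^ (δ - 1) - l * x ^ δ) * Real.exp (-(l * x)) with hf
  set ε : ℝ := min 1 (|δ| / (2 * l)) with hε
  have hδabs : 0 < |δ| := abs_pos.mpr hδ0
  have hεpos : 0 < ε := lt_min one_pos (by positivity)
  have hε1 : ε ≤ 1 := min_le_left _ _
  set c : ℝ := (δ ^ 2 / 4) * Real.exp (-(2 * l)) with hc
  have hcpos : 0 < c := by positivity
  -- pointwise lower bound on Ioo 0 ε
  have key : ∀ x ∈ Ioo (0:ℝ) ε,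
      ENNReal.ofReal (c * x ^ (2 * δ - 2)) ≤ ENNReal.ofReal ((f x) ^ 2) := by
    intro x hx
    apply ENNReal.ofReal_le_ofReal
    have hx0 : 0 < x := hx.1
    have hxε : x < ε := hx.2
    have hx1 : x ≤ 1 := hxε.le.trans hε1
    have hA : 0 < x ^ (δ - 1) := Real.rpow_pos_of_pos hx0 _
    have hBA : x ^ δ = x ^ (δ - 1) * x := by
      rw [← Real.rpow_add_one hx0.ne']; ring_nf
    have hx2 : x ^ (2 * δ - 2) = (x ^ (δ - 1)) ^ 2 := by
      rw [← Real.rpow_natCast (x ^ (δ - 1)) 2, ← Real.rpow_mul hx0.le]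
      norm_num; ring_nf
    have hexp : Real.exp (-l) ≤ Real.exp (-(l * x)) := by
      apply Real.exp_le_exp.mpr; nlinarith
    have hexp2 : Real.exp (-(2 * l)) = Real.exp (-l) ^ 2 := by
      rw [← Real.exp_nat_mul]; norm_num
    have hxd : l * x ≤ |δ| / 2 := by
      have h := hxε.trans_le (min_le_right 1 (|δ| / (2 * l)))
      calc l * x ≤ l * (|δ| / (2 * l)) := by nlinarith
        _ = |δ| / 2 := by field_simp
    set A := x ^ (δ - 1) with hAdef
    have h1 : l * x ^ δ ≤ (|δ| / 2) * A := by
      rw [hBA]; nlinarith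
    have h2 : (|δ| / 2) * A ≤ |δ * A - l * x ^ δ| := by
      have h3 : |δ * A| = |δ| * A := by rw [abs_mul, abs_of_pos hA]
      have h4 : |l * x ^ δ| = l * x ^ δ := by
        refine abs_of_pos (mul_pos hl (Real.rpow_pos_of_pos hx0 _))
      have h5 := abs_sub_abs_le_abs_sub (δ * A) (l * x ^ δ)
      rw [h3, h4] at h5
      linarith
    have hsq : (δ ^ 2 / 4) * A ^ 2 ≤ (δ * A - l * x ^ δ) ^ 2 := by
      have h7 : (0:ℝ) ≤ (|δ| / 2) * A := by positivity
      have h9 := pow_le_pow_left₀ h7 h2 2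
      rw [sq_abs] at h9
      have h10 : ((|δ| / 2) * A) ^ 2 = δ ^ 2 / 4 * A ^ 2 := by
        rw [mul_pow, div_pow, sq_abs]; ring
      linarith
    have hE : 0 < Real.exp (-l) := Real.exp_pos _
    have hE2 : Real.exp (-l) ^ 2 ≤ Real.exp (-(l * x)) ^ 2 :=
      pow_le_pow_left₀ hE.le hexp 2
    have hfx : f x ^ 2 = (δ * A - l * x ^ δ) ^ 2 * Real.exp (-(l * x)) ^ 2 := by
      rw [hf]; ring
    rw [hfx, hc, hx2, hexp2]
    calc δ ^ 2 / 4 * Real.exp (-l) ^ 2 * A ^ 2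
        = (δ ^ 2 / 4 * A ^ 2) * Real.exp (-l) ^ 2 := by ring
      _ ≤ (δ * A - l * x ^ δ) ^ 2 * Real.exp (-(l * x)) ^ 2 := by
          apply mul_le_mul hsq hE2 (by positivity) (sq_nonneg _)
  -- the lower-bound function has infinite integral on Ioo 0 ε
  have hnotint : ¬ IntegrableOn (fun x : ℝ => x ^ (2 * δ - 2)) (Ioo (0:ℝ) ε) := by
    rw [intervalIntegral.integrableOn_Ioo_rpow_iff hεpos]
    intro h; linarith
  have hmeas : Measurable fun x : ℝ => x ^ (2 * δ - 2) := by fun_prop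
  have hlin : (∫⁻ x in Ioo (0:ℝ) ε, ENNReal.ofReal (c * x ^ (2 * δ - 2))) = ⊤ := by
    by_contra h
    apply hnotint
    have : IntegrableOn (fun x : ℝ => c * x ^ (2 * δ - 2)) (Ioo (0:ℝ) ε) := by
      constructor
      · exact (hmeas.const_mul c).aestronglyMeasurable
      · rw [hasFiniteIntegral_iff_ofReal]
        · exact lt_top_iff_ne_top.mpr h
        · filter_upwards [ae_restrict_mem measurableSet_Ioo] with x hx
          have := Real.rpow_pos_of_pos hx.1 (2 * δ - 2)
          positivity
    have h2 : IntegrableOn (fun x : ℝ => c⁻¹ * (c * x ^ (2 * δ - 2))) (Ioo (0:ℝ) ε) :=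
      this.const_mul c⁻¹
    refine h2.congr_fun (fun x hx => ?_) measurableSet_Ioo
    field_simp
  have main : (∫⁻ x in Set.Ioc (0:ℝ) 1, ENNReal.ofReal ((f x) ^ 2)) = ⊤ := by
    rw [eq_top_iff, ← hlin]
    calc (∫⁻ x in Ioo (0:ℝ) ε, ENNReal.ofReal (c * x ^ (2 * δ - 2)))
        ≤ ∫⁻ x in Ioo (0:ℝ) ε, ENNReal.ofReal ((f x) ^ 2) := by
          apply setLIntegral_mono' measurableSet_Ioo key
      _ ≤ ∫⁻ x in Set.Ioc (0:ℝ) 1, ENNReal.ofReal ((f x) ^ 2) := by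
          apply lintegral_mono_set
          intro x hx
          exact ⟨hx.1, hx.2.le.trans hε1⟩
  refine ⟨main, ?_⟩
  intro hmem
  have hint := hmem.integrable_sq
  have hlt : (∫⁻ x, ENNReal.ofReal ((f x) ^ 2) ∂(volume.restrict (Set.Ioi 0))) < ⊤ :=
    (lintegral_ofReal_le_lintegral_enorm _).trans_lt hint.2
  have hge : (∫⁻ x in Set.Ioc (0:ℝ) 1, ENNReal.ofReal ((f x) ^ 2))
      ≤ ∫⁻ x, ENNReal.ofReal ((f x) ^ 2) ∂(volume.restrict (Set.Ioi 0)) :=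
    lintegral_mono_set (fun x hx => hx.1)
  rw [main] at hge
  exact absurd (hge.trans_lt hlt) (by simp)
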